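/- In every total-payoff game, for every vertex v, the lower value equals the upper value: Val⁻(v) = Val⁺(v); i.e., total-payoff games are determined. -/

import Mathlib

open Filter

/-- A two-player turn-based weighted game graph. `owner v = true` means that
vertex `v` belongs to player Max, `owner v = false` that it belongs to player Min.
Every vertex has at least one successor. -/
structure Game (V : Type) where
  owner : V → Bool
  E : V → V → Prop
  nonempty : ∀ v, ∃ v', E v v'
  w : V → V → ℤ

namespace Game

variable {V : Type}

/-- The (reversed) history of the first `k` vertices of `π` (most recent first). -/
def hist (π : ℕ → V) (k : ℕ) : List V := (List.ofFn fun i : Fin k => π i).reverse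

/-- A strategy: given the (reversed) list of previously visited vertices and the current
vertex, it picks a successor of the current vertex. -/
structure Strategy (g : Game V) where
  next : List V → V → V
  valid : ∀ h v, g.E v (next h v)

/-- A memoryless strategy only depends on the current vertex. -/
def Strategy.Memoryless {g : Game V} (s : g.Strategy) : Prop :=
  ∀ h h' v, s.next h v = s.next h' v

/-- A finite-memory strategy is one encoded by a deterministic Moore machine
`⟨M, m0, up, dec⟩`: the choice after a finite play is `dec` applied to the memory state
reached by reading the play (the initial vertex is not read) and to the last vertex. -/
def Strategy.FiniteMemory {g : Game V} (s : g.Strategy) : Prop :=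
  ∃ (M : Type) (_ : Fintype M) (m0 : M) (up : M → V → M) (dec : M → V → V),
    ∀ h v, s.next h v = dec (List.foldl up m0 (((h.reverse ++ [v]).drop 1))) v

variable (g : Game V)

/-- Next vertex chosen by the owner of the current vertex. -/
def step (σ τ : g.Strategy) (h : List V) (v : V) : V :=
  if g.owner v then σ.next h v else τ.next h v

/-- Current vertex and reversed history after `k` steps of the play `Play(v, σ, τ)`. -/
def playAux (σ τ : g.Strategy) (v : V) : ℕ → V × List V
  | 0 => (v, [])
  | k+1 =>
      let p := playAux σ τ v k
      (g.step σ τ p.2 p.1, p.1 :: p.2)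

/-- `Play(v, σ, τ)`: the unique play starting in `v` and conforming to the
strategy `σ` of Max and the strategy `τ` of Min. -/
def play (σ τ : g.Strategy) (v : V) (k : ℕ) : V := (g.playAux σ τ v k).1

/-- An infinite sequence of vertices is a play when consecutive vertices are linked
by edges. -/
def IsPlay (π : ℕ → V) : Prop := ∀ k, g.E (π k) (π (k+1))

/-- A play conforms to a strategy `s` of the player `p` if, whenever the current vertex
belongs to `p`, the next vertex is the one prescribed by `s`. -/
def Conforms (p : Bool) (s : g.Strategy) (π : ℕ → V) : Prop :=
  ∀ k, g.owner (π k) = p → π (k+1) = s.next (hist π k) (π k)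

/-- Total-payoff of the prefix of length `k`: the sum of the first `k` edge weights. -/
def TPfin (π : ℕ → V) (k : ℕ) : ℤ := ∑ i ∈ Finset.range k, g.w (π i) (π (i+1))

/-- Total payoff of an infinite play: `liminf` of the payoffs of its prefixes. -/
noncomputable def TP (π : ℕ → V) : EReal :=
  liminf (fun k => (((g.TPfin π k : ℤ) : ℝ) : EReal)) atTop

/-- Mean payoff of an infinite play. -/
noncomputable def MP (π : ℕ → V) : EReal :=
  liminf (fun k => ((((g.TPfin π k : ℤ) : ℝ) / (k : ℝ)) : EReal)) atTop

open Classical in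
/-- Min-cost reachability payoff with target `t`: total payoff up to the first visit
of `t`, and `+∞` if `t` is never visited. -/
noncomputable def MCR (t : V) (π : ℕ → V) : EReal :=
  if h : ∃ k, π k = t then (((g.TPfin π (Nat.find h) : ℤ) : ℝ) : EReal) else ⊤

open Classical in
/-- `MCR` payoff restricted to reaching the target among the first `i+1` vertices. -/
noncomputable def MCRbd (t : V) (i : ℕ) (π : ℕ → V) : EReal :=
  if ∃ k ≤ i, π k = t then g.MCR t π else ⊤

/-- Value of a strategy `σ` of Max from `v` : `inf_τ P(Play(v, σ, τ))`. -/
noncomputable def valMax (P : (ℕ → V) → EReal) (v : V) (σ : g.Strategy) : EReal :=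
  ⨅ τ : g.Strategy, P (g.play σ τ v)

/-- Value of a strategy `τ` of Min from `v` : `sup_σ P(Play(v, σ, τ))`. -/
noncomputable def valMin (P : (ℕ → V) → EReal) (v : V) (τ : g.Strategy) : EReal :=
  ⨆ σ : g.Strategy, P (g.play σ τ v)

/-- Lower value `Val⁻(v) = sup_σ inf_τ P(Play(v, σ, τ))`. -/
noncomputable def lowerVal (P : (ℕ → V) → EReal) (v : V) : EReal :=
  ⨆ σ : g.Strategy, g.valMax P v σ

/-- Upper value `Val⁺(v) = inf_τ sup_σ P(Play(v, σ, τ))`. -/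
noncomputable def upperVal (P : (ℕ → V) → EReal) (v : V) : EReal :=
  ⨅ τ : g.Strategy, g.valMin P v τ

end Game

/-- A min-cost reachability game: a game together with a target vertex `t` whose only
outgoing edge is a self-loop of weight `0`. -/
structure MCRGame (V : Type) extends Game V where
  t : V
  loop : E t t
  loopOnly : ∀ v, E t v → v = t
  loopZero : w t t = 0

/-- The value of a (determined) MCR game. -/
noncomputable def MCRGame.Val {V : Type} (G : MCRGame V) : V → EReal :=
  fun v => G.toGame.lowerVal (G.toGame.MCR G.t) v

/-- The `i`-step value `val_i(v) = inf_τ sup_σ MCR_i(Play(v, σ, τ))`. -/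
noncomputable def MCRGame.ival {V : Type} (G : MCRGame V) (i : ℕ) : V → EReal :=
  fun v => G.toGame.upperVal (G.toGame.MCRbd G.t i) v


namespace BuchiDet

variable {S : Type} (R : S → S → Prop) (own : S → Bool) (p : Bool)

open Classical in
/-- One-step controllable predecessor for player `p`. -/
noncomputable def Pre (Z : Set S) : Set S :=
  {s | if own s = p then ∃ s', R s s' ∧ s' ∈ Z else ∀ s', R s s' → s' ∈ Z}

lemma Pre_mono {Z Z' : Set S} (h : Z ⊆ Z') : Pre R own p Z ⊆ Pre R own p Z' := by
  intro s hs
  by_cases hp : own s = p <;> simp only [Pre, Set.mem_setOf_eq, if_pos, if_neg, hp] at hs ⊢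
  · obtain ⟨s', h1, h2⟩ := hs; exact ⟨s', h1, h h2⟩
  · exact fun s' hr => h (hs s' hr)

noncomputable def AttrN (T : Set S) : ℕ → Set S
  | 0 => T
  | n+1 => AttrN T n ∪ Pre R own p (AttrN T n)

lemma AttrN_mono_nat (T : Set S) : Monotone (AttrN R own p T) :=
  monotone_nat_of_le_succ fun _ => Set.subset_union_left

noncomputable def Attr (T : Set S) : Set S := ⋃ n, AttrN R own p T n

lemma AttrN_subset_Attr (T : Set S) (n : ℕ) : AttrN R own p T n ⊆ Attr R own p T :=
  Set.subset_iUnion (AttrN R own p T) n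

lemma subset_Attr (T : Set S) : T ⊆ Attr R own p T := AttrN_subset_Attr R own p T 0

lemma AttrN_mono_T {T T' : Set S} (h : T ⊆ T') : ∀ n, AttrN R own p T n ⊆ AttrN R own p T' n := by
  intro n
  induction n with
  | zero => exact h
  | succ n ih => exact Set.union_subset_union ih (Pre_mono R own p ih)

lemma Attr_mono {T T' : Set S} (h : T ⊆ T') : Attr R own p T ⊆ Attr R own p T' :=
  Set.iUnion_mono (AttrN_mono_T R own p h)

lemma attr_succ {T : Set S} {s s' : S} (hp : own s = p) (hR : R s s')
    (h : s' ∈ Attr R own p T) : s ∈ Attr R own p T := by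
  obtain ⟨n, hn⟩ := Set.mem_iUnion.1 h
  refine AttrN_subset_Attr R own p T (n+1) (Set.mem_union_right _ ?_)
  simp only [Pre, Set.mem_setOf_eq, if_pos hp]
  exact ⟨s', hR, hn⟩

lemma exists_uniform {T : Set S} (t : Finset S) :
    (∀ s' ∈ t, s' ∈ Attr R own p T) → ∃ N, ∀ s' ∈ t, s' ∈ AttrN R own p T N := by
  classical
  induction t using Finset.induction_on with
  | empty => exact fun _ => ⟨0, by simp⟩
  | @insert a t' ha ih =>
    intro h
    obtain ⟨N, hN⟩ := ih fun s' hs' => h s' (Finset.mem_insert_of_mem hs')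
    obtain ⟨n, hn⟩ := Set.mem_iUnion.1 (h a (Finset.mem_insert_self _ _))
    refine ⟨max N n, fun s' hs' => ?_⟩
    rcases Finset.mem_insert.1 hs' with rfl | hs'
    · exact AttrN_mono_nat R own p T (le_max_right N n) hn
    · exact AttrN_mono_nat R own p T (le_max_left N n) (hN s' hs')

lemma attr_forall (hfin : ∀ s, {s' | R s s'}.Finite) {T : Set S} {s : S} (hp : ¬ own s = p)
    (h : ∀ s', R s s' → s' ∈ Attr R own p T) : s ∈ Attr R own p T := by
  obtain ⟨N, hN⟩ := exists_uniform R own p (hfin s).toFinset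
    (fun s' hs' => h s' (by simpa using hs'))
  refine AttrN_subset_Attr R own p T (N+1) (Set.mem_union_right _ ?_)
  simp only [Pre, Set.mem_setOf_eq, if_neg hp]
  exact fun s' hr => hN s' (by simpa using hr)

noncomputable def arank (T : Set S) (s : S) : ℕ := sInf {n | s ∈ AttrN R own p T n}

lemma arank_mem {T : Set S} {s : S} (h : s ∈ Attr R own p T) :
    s ∈ AttrN R own p T (arank R own p T s) := by
  obtain ⟨n, hn⟩ := Set.mem_iUnion.1 h
  exact Nat.sInf_mem (⟨n, hn⟩ : {n | s ∈ AttrN R own p T n}.Nonempty)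

lemma arank_le {T : Set S} {s : S} {n : ℕ} (h : s ∈ AttrN R own p T n) :
    arank R own p T s ≤ n := Nat.sInf_le h

lemma attr_step {T : Set S} {s : S} (h : s ∈ Attr R own p T) (hT : s ∉ T) :
    ∃ m, arank R own p T s = m + 1 ∧ s ∈ Pre R own p (AttrN R own p T m) := by
  have hm := arank_mem R own p h
  rcases hn : arank R own p T s with _ | m
  · rw [hn] at hm; exact absurd hm hT
  · rw [hn] at hm
    rcases hm with hm | hm
    · exact absurd (arank_le R own p hm) (by omega)
    · exact ⟨m, rfl, hm⟩

variable (F : Set S)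

noncomputable def Phi : Set S →o Set S :=
  ⟨fun Z => Attr R own p (F ∩ Pre R own p Z),
   fun _ _ h => Attr_mono R own p (Set.inter_subset_inter_right _ (Pre_mono R own p h))⟩

noncomputable def Zseq (γ : Ordinal) : Set S := OrdinalApprox.gfpApprox (Phi R own p F) ⊤ γ

noncomputable def Wset : Set S :=
  Zseq R own p F (Order.succ (Cardinal.mk (Set S))).ord

lemma Wset_fixed : Phi R own p F (Wset R own p F) = Wset R own p F :=
  OrdinalApprox.gfpApprox_ord_mem_fixedPoint (Phi R own p F) (x := ⊤) le_top

lemma Wset_le_Z (γ : Ordinal) : Wset R own p F ⊆ Zseq R own p F γ :=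
  OrdinalApprox.le_gfpApprox_of_mem_fixedPoints (Phi R own p F) (x := ⊤)
    (Wset_fixed R own p F) le_top γ

lemma mem_Z_iff {s : S} {γ : Ordinal} :
    s ∈ Zseq R own p F γ ↔ ∀ β < γ, s ∈ Phi R own p F (Zseq R own p F β) := by
  rw [Zseq, OrdinalApprox.gfpApprox]
  simp only [Set.top_eq_univ, Set.inf_eq_inter, Set.univ_inter, Set.iInf_eq_iInter, Set.mem_iInter]
  exact Iff.rfl

noncomputable def rkOrd (s : S) : Ordinal := sInf {β | s ∉ Phi R own p F (Zseq R own p F β)}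

lemma rk_nonempty {s : S} (h : s ∉ Wset R own p F) :
    {β | s ∉ Phi R own p F (Zseq R own p F β)}.Nonempty := by
  rw [Wset, mem_Z_iff] at h
  push_neg at h
  obtain ⟨β, _, hβ⟩ := h
  exact ⟨β, hβ⟩

lemma rk_spec {s : S} (h : s ∉ Wset R own p F) :
    s ∉ Phi R own p F (Zseq R own p F (rkOrd R own p F s)) :=
  csInf_mem (rk_nonempty R own p F h)

lemma rk_le {s : S} {γ : Ordinal} (h : s ∉ Phi R own p F (Zseq R own p F γ)) :
    rkOrd R own p F s ≤ γ := csInf_le' h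

lemma rk_lt_of_not_mem_Z {s : S} {γ : Ordinal} (h : s ∉ Zseq R own p F γ) :
    rkOrd R own p F s < γ := by
  rw [mem_Z_iff] at h
  push_neg at h
  obtain ⟨β, hβ, hs⟩ := h
  exact lt_of_le_of_lt (rk_le R own p F hs) hβ

lemma W_subset_Phi_Z (γ : Ordinal) :
    Wset R own p F ⊆ Phi R own p F (Zseq R own p F γ) := by
  conv_lhs => rw [← Wset_fixed R own p F]
  exact (Phi R own p F).mono (Wset_le_Z R own p F γ)


section CoBuchi

/-- Step property for the co-Büchi player (`!p`), at a `p`-owned vertex: all moves are fine. -/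
lemma cobuchi_step_forall {s : S} (hW : s ∉ Wset R own p F) (hp : own s = p) :
    ∀ s', R s s' → s' ∉ Wset R own p F ∧
      rkOrd R own p F s' ≤ rkOrd R own p F s ∧
      (s ∈ F → rkOrd R own p F s' < rkOrd R own p F s) := by
  intro s' hR'
  set γ := rkOrd R own p F s with hγ
  have hs := rk_spec R own p F hW
  by_cases hF : s ∈ F
  · have hnp : s ∉ Pre R own p (Zseq R own p F γ) := fun hq =>
      hs (subset_Attr R own p _ ⟨hF, hq⟩)
    simp only [Pre, Set.mem_setOf_eq, if_pos hp] at hnp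
    push_neg at hnp
    have h1 : s' ∉ Zseq R own p F γ := hnp s' hR'
    exact ⟨fun hc => h1 (Wset_le_Z R own p F γ hc),
      (rk_lt_of_not_mem_Z R own p F h1).le, fun _ => rk_lt_of_not_mem_Z R own p F h1⟩
  · have h1 : s' ∉ Phi R own p F (Zseq R own p F γ) := fun hc =>
      hs (attr_succ R own p hp hR' hc)
    exact ⟨fun hc => h1 (W_subset_Phi_Z R own p F γ hc),
      rk_le R own p F h1, fun hc => absurd hc hF⟩

lemma cobuchi_step_exists (hfin : ∀ s, {s' | R s s'}.Finite)
    (_htot : ∀ s, ∃ s', R s s') {s : S} (hW : s ∉ Wset R own p F) (hp : ¬ own s = p) :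
    ∃ s', R s s' ∧ s' ∉ Wset R own p F ∧
      rkOrd R own p F s' ≤ rkOrd R own p F s ∧
      (s ∈ F → rkOrd R own p F s' < rkOrd R own p F s) := by
  set γ := rkOrd R own p F s with hγ
  have hs := rk_spec R own p F hW
  by_cases hF : s ∈ F
  · have hnp : s ∉ Pre R own p (Zseq R own p F γ) := fun hq =>
      hs (subset_Attr R own p _ ⟨hF, hq⟩)
    simp only [Pre, Set.mem_setOf_eq, if_neg hp] at hnp
    push_neg at hnp
    obtain ⟨s', hR', h1⟩ := hnp
    exact ⟨s', hR', fun hc => h1 (Wset_le_Z R own p F γ hc),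
      (rk_lt_of_not_mem_Z R own p F h1).le, fun _ => rk_lt_of_not_mem_Z R own p F h1⟩
  · have h1 : ∃ s', R s s' ∧ s' ∉ Phi R own p F (Zseq R own p F γ) := by
      by_contra hc
      push_neg at hc
      exact hs (attr_forall R own p hfin hp hc)
    obtain ⟨s', hR', h1⟩ := h1
    exact ⟨s', hR', fun hc => h1 (W_subset_Phi_Z R own p F γ hc),
      rk_le R own p F h1, fun hc => absurd hc hF⟩

variable (hfin : ∀ s, {s' | R s s'}.Finite) (htot : ∀ s, ∃ s', R s s')

open Classical in
noncomputable def cobuchiStrat : S → S := fun s =>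
  if h : ¬ own s = p ∧ s ∉ Wset R own p F then
    (cobuchi_step_exists R own p F hfin htot h.2 h.1).choose
  else (htot s).choose

lemma cobuchiStrat_spec (s : S) :
    R s (cobuchiStrat R own p F hfin htot s) ∧
    (¬ own s = p → s ∉ Wset R own p F →
      (cobuchiStrat R own p F hfin htot s ∉ Wset R own p F ∧
       rkOrd R own p F (cobuchiStrat R own p F hfin htot s) ≤ rkOrd R own p F s ∧
       (s ∈ F → rkOrd R own p F (cobuchiStrat R own p F hfin htot s) < rkOrd R own p F s))) := by
  rw [cobuchiStrat]
  split
  · rename_i h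
    obtain ⟨h1, h2, h3⟩ := (cobuchi_step_exists R own p F hfin htot h.2 h.1).choose_spec
    exact ⟨h1, fun _ _ => ⟨h2, h3⟩⟩
  · rename_i h
    exact ⟨(htot s).choose_spec, fun h1 h2 => absurd ⟨h1, h2⟩ h⟩

theorem cobuchi_win (π : ℕ → S) (hR : ∀ k, R (π k) (π (k+1)))
    (hconf : ∀ k, ¬ own (π k) = p → π (k+1) = cobuchiStrat R own p F hfin htot (π k))
    (h0 : π 0 ∉ Wset R own p F) : ∃ K, ∀ k ≥ K, π k ∉ F := by
  have step : ∀ k, π k ∉ Wset R own p F →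
      (π (k+1) ∉ Wset R own p F ∧
       rkOrd R own p F (π (k+1)) ≤ rkOrd R own p F (π k) ∧
       (π k ∈ F → rkOrd R own p F (π (k+1)) < rkOrd R own p F (π k))) := by
    intro k hk
    by_cases hp : own (π k) = p
    · exact cobuchi_step_forall R own p F hk hp _ (hR k)
    · rw [hconf k hp]
      exact (cobuchiStrat_spec R own p F hfin htot (π k)).2 hp hk
  have hWall : ∀ k, π k ∉ Wset R own p F := by
    intro k
    induction k with
    | zero => exact h0
    | succ n ih => exact (step n ih).1
  set α : ℕ → Ordinal := fun k => rkOrd R own p F (π k) with hα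
  have hmono : ∀ j k, j ≤ k → α k ≤ α j := by
    intro j k hjk
    induction k, hjk using Nat.le_induction with
    | base => exact le_rfl
    | succ k hk ih => exact le_trans ((step k (hWall k)).2.1) ih
  obtain ⟨k0, hk0⟩ : ∃ k0, sInf (Set.range α) = α k0 := by
    have := csInf_mem (Set.range_nonempty α)
    exact this.imp fun k0 h => h.symm
  refine ⟨k0, fun k hk hkF => ?_⟩
  have h1 : α (k+1) < α k := (step k (hWall k)).2.2 hkF
  have h2 : α k ≤ α k0 := hmono k0 k hk
  have h3 : sInf (Set.range α) ≤ α (k+1) := csInf_le' (Set.mem_range_self _)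
  rw [hk0] at h3
  exact absurd (h3.trans_lt (h1.trans_le h2)) (lt_irrefl _)

end CoBuchi

section Buchi

variable (htot : ∀ s, ∃ s', R s s')

noncomputable def Tgt : Set S := F ∩ Pre R own p (Wset R own p F)

lemma W_eq_attr : Wset R own p F = Attr R own p (Tgt R own p F) :=
  (Wset_fixed R own p F).symm

lemma buchi_choice (htot : ∀ s, ∃ s', R s s') (s : S) : ∃ s', R s s' ∧ (own s = p →
    ((s ∈ Tgt R own p F → s' ∈ Wset R own p F) ∧
     (s ∈ Attr R own p (Tgt R own p F) → s ∉ Tgt R own p F →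
       s' ∈ Attr R own p (Tgt R own p F) ∧
       arank R own p (Tgt R own p F) s' < arank R own p (Tgt R own p F) s))) := by
  by_cases hp : own s = p
  · by_cases hT : s ∈ Tgt R own p F
    · have h2 := hT.2
      simp only [Pre, Set.mem_setOf_eq, if_pos hp] at h2
      obtain ⟨s', hR', hW'⟩ := h2
      exact ⟨s', hR', fun _ => ⟨fun _ => hW', fun _ hT' => absurd hT hT'⟩⟩
    · by_cases hA : s ∈ Attr R own p (Tgt R own p F)
      · obtain ⟨m, hm, hpre⟩ := attr_step R own p hA hT
        simp only [Pre, Set.mem_setOf_eq, if_pos hp] at hpre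
        obtain ⟨s', hR', hmem⟩ := hpre
        refine ⟨s', hR', fun _ => ⟨fun h => absurd h hT, fun _ _ =>
          ⟨AttrN_subset_Attr R own p _ m hmem, ?_⟩⟩⟩
        calc arank R own p (Tgt R own p F) s' ≤ m := arank_le R own p hmem
        _ < m + 1 := Nat.lt_succ_self m
        _ = arank R own p (Tgt R own p F) s := hm.symm
      · obtain ⟨s', hs'⟩ := htot s
        exact ⟨s', hs', fun _ => ⟨fun h => absurd h hT, fun h _ => absurd h hA⟩⟩
  · obtain ⟨s', hs'⟩ := htot s
    exact ⟨s', hs', fun h => absurd h hp⟩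

noncomputable def buchiStrat : S → S := fun s => (buchi_choice R own p F htot s).choose

lemma buchiStrat_spec (s : S) :
    R s (buchiStrat R own p F htot s) ∧ (own s = p →
    ((s ∈ Tgt R own p F → buchiStrat R own p F htot s ∈ Wset R own p F) ∧
     (s ∈ Attr R own p (Tgt R own p F) → s ∉ Tgt R own p F →
       buchiStrat R own p F htot s ∈ Attr R own p (Tgt R own p F) ∧
       arank R own p (Tgt R own p F) (buchiStrat R own p F htot s) <
         arank R own p (Tgt R own p F) s))) :=
  (buchi_choice R own p F htot s).choose_spec

theorem buchi_win (π : ℕ → S) (hR : ∀ k, R (π k) (π (k+1)))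
    (hconf : ∀ k, own (π k) = p → π (k+1) = buchiStrat R own p F htot (π k))
    (h0 : π 0 ∈ Wset R own p F) : ∀ K, ∃ k ≥ K, π k ∈ F := by
  have tstep : ∀ k, π k ∈ Tgt R own p F → π (k+1) ∈ Wset R own p F := by
    intro k hk
    by_cases hp : own (π k) = p
    · rw [hconf k hp]
      exact ((buchiStrat_spec R own p F htot (π k)).2 hp).1 hk
    · have h2 := hk.2
      simp only [Pre, Set.mem_setOf_eq, if_neg hp] at h2
      exact h2 _ (hR k)
  have reach : ∀ n k, π k ∈ Attr R own p (Tgt R own p F) →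
      arank R own p (Tgt R own p F) (π k) ≤ n → ∃ j ≥ k, π j ∈ Tgt R own p F := by
    intro n
    induction n with
    | zero =>
      intro k hk hle
      have hm := arank_mem R own p hk
      rw [Nat.le_zero.1 hle] at hm
      exact ⟨k, le_rfl, hm⟩
    | succ n ih =>
      intro k hk hle
      by_cases hT : π k ∈ Tgt R own p F
      · exact ⟨k, le_rfl, hT⟩
      · by_cases hp : own (π k) = p
        · have hs := ((buchiStrat_spec R own p F htot (π k)).2 hp).2 hk hT
          rw [← hconf k hp] at hs
          obtain ⟨j, hj, hjT⟩ := ih (k+1) hs.1 (by omega)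
          exact ⟨j, by omega, hjT⟩
        · obtain ⟨m, hm, hpre⟩ := attr_step R own p hk hT
          simp only [Pre, Set.mem_setOf_eq, if_neg hp] at hpre
          have hmem : π (k+1) ∈ AttrN R own p (Tgt R own p F) m := hpre _ (hR k)
          have hle' : arank R own p (Tgt R own p F) (π (k+1)) ≤ n := by
            have := arank_le R own p hmem
            omega
          obtain ⟨j, hj, hjT⟩ := ih (k+1) (AttrN_subset_Attr R own p _ m hmem) hle'
          exact ⟨j, by omega, hjT⟩
  have wstep : ∀ k, π k ∈ Wset R own p F →
      ∃ j ≥ k, π j ∈ Tgt R own p F ∧ π (j+1) ∈ Wset R own p F := by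
    intro k hk
    obtain ⟨j, hj, hjT⟩ := reach _ k ((W_eq_attr R own p F) ▸ hk) le_rfl
    exact ⟨j, hj, hjT, tstep j hjT⟩
  have unbdd : ∀ K, ∃ k ≥ K, π k ∈ Wset R own p F := by
    intro K
    induction K with
    | zero => exact ⟨0, le_rfl, h0⟩
    | succ K ih =>
      obtain ⟨k, hk, hW⟩ := ih
      obtain ⟨j, hj, _, hW'⟩ := wstep k hW
      exact ⟨j+1, by omega, hW'⟩
  intro K
  obtain ⟨k, hk, hW⟩ := unbdd K
  obtain ⟨j, hj, hT, _⟩ := wstep k hW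
  exact ⟨j, by omega, hT.1⟩

end Buchi

end BuchiDet

namespace TPGlue

variable {V : Type} (g : Game V)

/-- The accumulated weight along a reversed history ending at current vertex `u`. -/
def cnt : List V → V → ℤ
  | [], _ => 0
  | x :: t, u => cnt t x + g.w x u

lemma hist_zero (π : ℕ → V) : Game.hist π 0 = [] := by
  simp [Game.hist]

lemma hist_succ (π : ℕ → V) (k : ℕ) :
    Game.hist π (k+1) = π k :: Game.hist π k := by
  rw [Game.hist, Game.hist, List.ofFn_succ', List.concat_eq_append,
    List.reverse_append]
  simp

lemma playAux_snd (σ τ : g.Strategy) (v : V) (k : ℕ) :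
    (g.playAux σ τ v k).2 = Game.hist (g.play σ τ v) k := by
  induction k with
  | zero => simp [Game.playAux, hist_zero]
  | succ k ih => rw [Game.playAux, hist_succ]; exact congrArg _ ih

lemma play_zero (σ τ : g.Strategy) (v : V) : g.play σ τ v 0 = v := rfl

lemma play_succ (σ τ : g.Strategy) (v : V) (k : ℕ) :
    g.play σ τ v (k+1) =
      g.step σ τ (Game.hist (g.play σ τ v) k) (g.play σ τ v k) := by
  show (g.playAux σ τ v (k+1)).1 = _
  rw [Game.playAux, playAux_snd]
  rfl

lemma play_succ_max (σ τ : g.Strategy) (v : V) (k : ℕ)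
    (ho : g.owner (g.play σ τ v k) = true) :
    g.play σ τ v (k+1) = σ.next (Game.hist (g.play σ τ v) k) (g.play σ τ v k) := by
  rw [play_succ, Game.step, ho]
  simp

lemma play_succ_min (σ τ : g.Strategy) (v : V) (k : ℕ)
    (ho : g.owner (g.play σ τ v k) = false) :
    g.play σ τ v (k+1) = τ.next (Game.hist (g.play σ τ v) k) (g.play σ τ v k) := by
  rw [play_succ, Game.step, ho]
  simp

lemma cnt_hist (π : ℕ → V) (k : ℕ) :
    cnt g (Game.hist π k) (π k) = g.TPfin π k := by
  induction k with
  | zero => simp [hist_zero, cnt, Game.TPfin]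
  | succ k ih =>
    rw [hist_succ, cnt, ih, Game.TPfin, Game.TPfin, Finset.sum_range_succ]

lemma TPfin_zero (π : ℕ → V) : g.TPfin π 0 = 0 := by
  simp [Game.TPfin]

lemma TPfin_succ (π : ℕ → V) (k : ℕ) :
    g.TPfin π (k+1) = g.TPfin π k + g.w (π k) (π (k+1)) := by
  rw [Game.TPfin, Game.TPfin, Finset.sum_range_succ]

/-- The counter-augmented transition relation on `V × ℤ`. -/
def aR : V × ℤ → V × ℤ → Prop := fun s s' => g.E s.1 s'.1 ∧ s'.2 = s.2 + g.w s.1 s'.1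

def aOwn : V × ℤ → Bool := fun s => g.owner s.1

lemma atot : ∀ s, ∃ s', aR g s s' := by
  intro s
  obtain ⟨u, hu⟩ := g.nonempty s.1
  exact ⟨(u, s.2 + g.w s.1 u), hu, rfl⟩

lemma afin [Fintype V] : ∀ s : V × ℤ, {s' | aR g s s'}.Finite := by
  intro s
  refine Set.Finite.subset (Set.finite_range (fun u : V => (u, s.2 + g.w s.1 u))) ?_
  rintro ⟨u', c'⟩ ⟨h1, h2⟩
  exact ⟨u', Prod.ext rfl h2.symm⟩

/-- Strategy induced by a function of the current vertex and accumulated weight. -/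
def stratOf (f : V × ℤ → V × ℤ) (hf : ∀ s, aR g s (f s)) : g.Strategy :=
  ⟨fun h u => (f (u, cnt g h u)).1, fun h u => (hf (u, cnt g h u)).1⟩

lemma stratOf_next (f : V × ℤ → V × ℤ) (hf : ∀ s, aR g s (f s)) (h : List V) (u : V) :
    (stratOf g f hf).next h u = (f (u, cnt g h u)).1 := rfl

lemma aug_edge (σ τ : g.Strategy) (v : V) (k : ℕ) :
    aR g (g.play σ τ v k, g.TPfin (g.play σ τ v) k)
      (g.play σ τ v (k+1), g.TPfin (g.play σ τ v) (k+1)) := by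
  refine ⟨?_, TPfin_succ g _ k⟩
  rw [play_succ, Game.step]
  split
  · exact σ.valid _ _
  · exact τ.valid _ _

lemma aug_conf_max (f : V × ℤ → V × ℤ) (hf : ∀ s, aR g s (f s)) (τ : g.Strategy)
    (v : V) (k : ℕ) (ho : g.owner (g.play (stratOf g f hf) τ v k) = true) :
    (g.play (stratOf g f hf) τ v (k+1), g.TPfin (g.play (stratOf g f hf) τ v) (k+1)) =
      f (g.play (stratOf g f hf) τ v k, g.TPfin (g.play (stratOf g f hf) τ v) k) := by
  have h1 : g.play (stratOf g f hf) τ v (k+1) =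
      (f (g.play (stratOf g f hf) τ v k, g.TPfin (g.play (stratOf g f hf) τ v) k)).1 := by
    rw [play_succ_max g _ τ v k ho, stratOf_next, cnt_hist]
  have h2 := (hf (g.play (stratOf g f hf) τ v k, g.TPfin (g.play (stratOf g f hf) τ v) k)).2
  refine Prod.ext h1 ?_
  rw [TPfin_succ, h2, h1]

lemma aug_conf_min (f : V × ℤ → V × ℤ) (hf : ∀ s, aR g s (f s)) (σ : g.Strategy)
    (v : V) (k : ℕ) (ho : g.owner (g.play σ (stratOf g f hf) v k) = false) :
    (g.play σ (stratOf g f hf) v (k+1), g.TPfin (g.play σ (stratOf g f hf) v) (k+1)) =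
      f (g.play σ (stratOf g f hf) v k, g.TPfin (g.play σ (stratOf g f hf) v) k) := by
  have h1 : g.play σ (stratOf g f hf) v (k+1) =
      (f (g.play σ (stratOf g f hf) v k, g.TPfin (g.play σ (stratOf g f hf) v) k)).1 := by
    rw [play_succ_min g σ _ v k ho, stratOf_next, cnt_hist]
  have h2 := (hf (g.play σ (stratOf g f hf) v k, g.TPfin (g.play σ (stratOf g f hf) v) k)).2
  refine Prod.ext h1 ?_
  rw [TPfin_succ, h2, h1]

theorem threshold [Fintype V] (r : ℤ) (v : V) :
    (∃ σ : g.Strategy, ∀ τ : g.Strategy,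
        ∀ᶠ k in Filter.atTop, r ≤ g.TPfin (g.play σ τ v) k) ∨
    (∃ τ : g.Strategy, ∀ σ : g.Strategy,
        ∃ᶠ k in Filter.atTop, g.TPfin (g.play σ τ v) k < r) := by
  classical
  set F : Set (V × ℤ) := {s | s.2 < r} with hF
  by_cases h0 : ((v, 0) : V × ℤ) ∈ BuchiDet.Wset (aR g) (aOwn g) false F
  · right
    set f := BuchiDet.buchiStrat (aR g) (aOwn g) false F (atot g) with hfdef
    have hf : ∀ s, aR g s (f s) := fun s =>
      (BuchiDet.buchiStrat_spec (aR g) (aOwn g) false F (atot g) s).1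
    refine ⟨stratOf g f hf, fun σ => ?_⟩
    set π := g.play σ (stratOf g f hf) v with hπ
    have hwin := BuchiDet.buchi_win (aR g) (aOwn g) false F (atot g)
      (fun k => (π k, g.TPfin π k)) (fun k => aug_edge g σ _ v k)
      (fun k hk => aug_conf_min g f hf σ v k hk)
      (by simpa [TPfin_zero, hπ, play_zero] using h0)
    rw [Filter.frequently_atTop]
    intro K
    obtain ⟨k, hk, hkF⟩ := hwin K
    exact ⟨k, hk, hkF⟩
  · left
    set f := BuchiDet.cobuchiStrat (aR g) (aOwn g) false F (afin g) (atot g) with hfdef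
    have hf : ∀ s, aR g s (f s) := fun s =>
      (BuchiDet.cobuchiStrat_spec (aR g) (aOwn g) false F (afin g) (atot g) s).1
    refine ⟨stratOf g f hf, fun τ => ?_⟩
    set π := g.play (stratOf g f hf) τ v with hπ
    have hwin := BuchiDet.cobuchi_win (aR g) (aOwn g) false F (afin g) (atot g)
      (fun k => (π k, g.TPfin π k)) (fun k => aug_edge g _ τ v k)
      (fun k hk => aug_conf_max g f hf τ v k (by simpa [aOwn, hπ] using hk))
      (by simpa [TPfin_zero, hπ, play_zero] using h0)
    rw [Filter.eventually_atTop]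
    obtain ⟨K, hK⟩ := hwin
    refine ⟨K, fun k hk => ?_⟩
    have := hK k hk
    simp only [hF, Set.mem_setOf_eq, not_lt] at this
    exact this

end TPGlue

/-- total-payoff games are determined: for every vertex the lower value
equals the upper value. -/
theorem statement_0 {V : Type} [Fintype V] (g : Game V) (v : V) :
    g.lowerVal g.TP v = g.upperVal g.TP v := by
  classical
  by_contra hne
  have hle : g.lowerVal g.TP v ≤ g.upperVal g.TP v := by
    refine iSup_le fun σ => le_iInf fun τ => ?_
    exact le_trans (iInf_le _ τ) (le_iSup (fun σ' => g.TP (g.play σ' τ v)) σ)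
  have hlt : g.lowerVal g.TP v < g.upperVal g.TP v := hle.lt_of_ne hne
  obtain ⟨r, hr1, hr2⟩ : ∃ r : ℤ, g.lowerVal g.TP v < ((r : ℝ) : EReal) ∧
      ((((r : ℝ) - 1 : ℝ)) : EReal) < g.upperVal g.TP v := by
    rcases eq_or_ne (g.lowerVal g.TP v) ⊥ with hL | hL
    · rcases eq_or_ne (g.upperVal g.TP v) ⊤ with hU | hU
      · refine ⟨1, ?_, ?_⟩
        · rw [hL]; exact EReal.bot_lt_coe _
        · rw [hU]; exact EReal.coe_lt_top _
      · have hU' : g.upperVal g.TP v ≠ ⊥ := by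
          rw [hL] at hlt
          exact hlt.ne'
        have hu : ((g.upperVal g.TP v).toReal : EReal) = g.upperVal g.TP v :=
          EReal.coe_toReal hU hU'
        set u := (g.upperVal g.TP v).toReal
        refine ⟨⌈u⌉, ?_, ?_⟩
        · rw [hL]; exact EReal.bot_lt_coe _
        · rw [← hu]
          have : ((⌈u⌉ : ℝ) - 1 : ℝ) < u := by
            have := Int.ceil_lt_add_one u
            linarith
          exact_mod_cast EReal.coe_lt_coe_iff.2 this
    · have hL2 : g.lowerVal g.TP v ≠ ⊤ := (lt_of_lt_of_le hlt le_top).ne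
      have hl : ((g.lowerVal g.TP v).toReal : EReal) = g.lowerVal g.TP v :=
        EReal.coe_toReal hL2 hL
      set l := (g.lowerVal g.TP v).toReal
      refine ⟨⌊l⌋ + 1, ?_, ?_⟩
      · rw [← hl]
        have : l < ((⌊l⌋ + 1 : ℤ) : ℝ) := by
          have := Int.lt_floor_add_one l
          push_cast
          linarith
        exact_mod_cast EReal.coe_lt_coe_iff.2 this
      · have h1 : ((((⌊l⌋ + 1 : ℤ) : ℝ) - 1 : ℝ) : EReal) ≤ g.lowerVal g.TP v := by
          rw [← hl]
          have : (((⌊l⌋ + 1 : ℤ) : ℝ) - 1 : ℝ) ≤ l := by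
            have := Int.floor_le l
            push_cast
            linarith
          exact_mod_cast EReal.coe_le_coe_iff.2 this
        exact lt_of_le_of_lt h1 hlt
  rcases TPGlue.threshold g r v with ⟨σ, hσ⟩ | ⟨τ, hτ⟩
  · have hv : ((r : ℝ) : EReal) ≤ g.valMax g.TP v σ := by
      refine le_iInf fun τ => ?_
      refine Filter.le_liminf_of_le (by isBoundedDefault) ?_
      filter_upwards [hσ τ] with k hk
      have : (r : ℝ) ≤ ((g.TPfin (g.play σ τ v) k : ℤ) : ℝ) := by exact_mod_cast hk
      exact EReal.coe_le_coe_iff.2 this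
    have h2 : ((r : ℝ) : EReal) ≤ g.lowerVal g.TP v :=
      le_trans hv (le_iSup (g.valMax g.TP v) σ)
    exact absurd hr1 (not_lt.2 h2)
  · have hv : g.valMin g.TP v τ ≤ ((((r : ℝ) - 1 : ℝ)) : EReal) := by
      refine iSup_le fun σ => ?_
      refine Filter.liminf_le_of_frequently_le' ?_
      refine (hτ σ).mono fun k hk => ?_
      have h3 : ((g.TPfin (g.play σ τ v) k : ℤ) : ℝ) ≤ ((r : ℝ) - 1 : ℝ) := by
        have : g.TPfin (g.play σ τ v) k ≤ r - 1 := by omega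
        push_cast
        exact_mod_cast this
      exact EReal.coe_le_coe_iff.2 h3
    have h2 : g.upperVal g.TP v ≤ ((((r : ℝ) - 1 : ℝ)) : EReal) :=
      le_trans (iInf_le _ τ) hv
    exact absurd hr2 (not_lt.2 h2)
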